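/- For every nowhere dense set K ⊆ [0,1]^d and all ε, δ > 0, there exists a homeomorphism h of [0,1]^d with ‖h - id‖ < δ such that λ^d(h(K)) < ε. -/

import Mathlib

open MeasureTheory Metric Set Filter Topology

/-- The unit cube `[0,1]^d` in Euclidean space. -/
def cube (d : ℕ) : Set (EuclideanSpace ℝ (Fin d)) := {x | ∀ i, x i ∈ Icc (0 : ℝ) 1}

noncomputable section

/-- Piecewise linear warp sending `[0,a]` to `[0,b]` and `[a,1]` to `[b,1]`. -/
def warp (a b t : ℝ) : ℝ := if t ≤ a then (b/a)*t else b + ((1-b)/(1-a))*(t-a)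

variable {a b t : ℝ}
set_option linter.unusedSectionVars false

lemma warp_zero (ha : 0 < a) : warp a b 0 = 0 := by simp [warp, ha.le]

lemma warp_self (ha : 0 < a) : warp a b a = b := by
  simp [warp, div_mul_cancel₀ _ ha.ne']

lemma warp_one (ha1 : a < 1) : warp a b 1 = 1 := by
  rw [warp, if_neg (not_le.2 ha1)]
  rw [div_mul_cancel₀ _ (by linarith : (1:ℝ) - a ≠ 0)]
  ring

lemma warp_strictMono (ha : 0 < a) (ha1 : a < 1) (hb : 0 < b) (hb1 : b < 1) :
    StrictMono (warp a b) := by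
  have key : ∀ s t, s < t → warp a b s < warp a b t := by
    intro s t hst
    unfold warp
    rcases le_or_gt s a with hs | hs <;> rcases le_or_gt t a with ht | ht
    · rw [if_pos hs, if_pos ht]
      have : 0 < b / a := div_pos hb ha
      nlinarith
    · rw [if_pos hs, if_neg (not_le.2 ht)]
      have h1 : (b/a)*s ≤ b := by
        rw [div_mul_eq_mul_div, div_le_iff₀ ha]; nlinarith
      have h2 : 0 < ((1-b)/(1-a))*(t-a) := by
        apply mul_pos (div_pos (by linarith) (by linarith)) (by linarith)
      linarith
    · linarith
    · rw [if_neg (not_le.2 hs), if_neg (not_le.2 ht)]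
      have : 0 < (1-b)/(1-a) := div_pos (by linarith) (by linarith)
      nlinarith
  exact key

lemma warp_continuous (ha : 0 < a) (ha1 : a < 1) : Continuous (warp a b) := by
  unfold warp
  apply Continuous.if_le (by fun_prop) (by fun_prop) continuous_id continuous_const
  intro x hx
  subst hx
  have hx0 : x ≠ 0 := by simpa using ha.ne'
  simp only [id, sub_self, mul_zero, add_zero]
  field_simp

lemma warp_warp (ha : 0 < a) (ha1 : a < 1) (hb : 0 < b) (hb1 : b < 1) :
    warp b a (warp a b t) = t := by
  unfold warp
  rcases le_or_gt t a with ht | ht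
  · rw [if_pos ht, if_pos (by rw [div_mul_eq_mul_div, div_le_iff₀ ha]; nlinarith)]
    field_simp
  · rw [if_neg (not_le.2 ht), if_neg (by push_neg; nlinarith [div_pos (sub_pos.2 hb1) (sub_pos.2 ha1)])]
    have h1 : (1:ℝ) - a ≠ 0 := by linarith
    have h2 : (1:ℝ) - b ≠ 0 := by linarith
    field_simp
    ring

lemma warp_nonneg (ha : 0 < a) (ha1 : a < 1) (hb : 0 < b) (hb1 : b < 1) (ht : 0 ≤ t) :
    0 ≤ warp a b t := by
  rcases eq_or_lt_of_le ht with h | h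
  · rw [← h, warp_zero ha]
  · exact (warp_zero (b := b) ha ▸ (warp_strictMono ha ha1 hb hb1 h)).le

lemma warp_le_one (ha : 0 < a) (ha1 : a < 1) (hb : 0 < b) (hb1 : b < 1) (ht : t ≤ 1) :
    warp a b t ≤ 1 := by
  rcases eq_or_lt_of_le ht with h | h
  · rw [h, warp_one ha1]
  · exact (warp_one (b := b) ha1 ▸ (warp_strictMono ha ha1 hb hb1 h)).le


section Gauge

variable {d : ℕ} [Nonempty (Fin d)]

/-- Asymmetric gauge of the box `∏ [lo i, hi i]` with respect to center `p`. -/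
def gA (lo hi p : EuclideanSpace ℝ (Fin d)) (v : EuclideanSpace ℝ (Fin d)) : ℝ :=
  Finset.univ.sup' Finset.univ_nonempty fun i =>
    max ((v i) / (hi i - p i)) ((-(v i)) / (p i - lo i))

variable {lo hi p : EuclideanSpace ℝ (Fin d)}

lemma term_nonneg (hp : ∀ i, lo i < p i ∧ p i < hi i) (v : EuclideanSpace ℝ (Fin d)) (i : Fin d) :
    0 ≤ max ((v i) / (hi i - p i)) ((-(v i)) / (p i - lo i)) := by
  rcases le_or_gt 0 (v i) with h | h
  · exact le_max_of_le_left (div_nonneg h (by linarith [(hp i).1, (hp i).2]))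
  · exact le_max_of_le_right (div_nonneg (by linarith) (by linarith [(hp i).1]))

lemma term_le_gA (v : EuclideanSpace ℝ (Fin d)) (i : Fin d) :
    max ((v i) / (hi i - p i)) ((-(v i)) / (p i - lo i)) ≤ gA lo hi p v := by
  unfold gA
  exact Finset.le_sup' (fun i => max ((v i) / (hi i - p i)) ((-(v i)) / (p i - lo i)))
    (Finset.mem_univ i)

lemma gA_nonneg (hp : ∀ i, lo i < p i ∧ p i < hi i) (v : EuclideanSpace ℝ (Fin d)) :
    0 ≤ gA lo hi p v := by
  obtain ⟨i⟩ := (inferInstance : Nonempty (Fin d))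
  exact le_trans (term_nonneg hp v i) (term_le_gA v i)

lemma gA_zero : gA lo hi p 0 = 0 := by
  have h : ∀ i : Fin d, (0 : EuclideanSpace ℝ (Fin d)) i = 0 := fun i => rfl
  simp [gA, h]

lemma gA_smul {c : ℝ} (hc : 0 ≤ c) (v : EuclideanSpace ℝ (Fin d)) :
    gA lo hi p (c • v) = c * gA lo hi p v := by
  unfold gA
  rw [Finset.comp_sup'_eq_sup'_comp Finset.univ_nonempty (fun t => c * t)
    (fun x y => mul_max_of_nonneg x y hc)]
  congr 1
  funext i
  have h : (c • v) i = c * v i := rfl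
  rw [Function.comp_apply, h, mul_max_of_nonneg _ _ hc]
  congr 1 <;> ring

lemma gA_continuous : Continuous (gA lo hi p) := by
  apply Continuous.finset_sup'_apply
  intro i _
  have h1 : Continuous fun v : EuclideanSpace ℝ (Fin d) => v i :=
    (EuclideanSpace.proj (𝕜 := ℝ) i).continuous
  fun_prop

lemma abs_coord_le (hp : ∀ i, lo i < p i ∧ p i < hi i) {W : ℝ}
    (hW : ∀ i, hi i - p i ≤ W ∧ p i - lo i ≤ W)
    (v : EuclideanSpace ℝ (Fin d)) (i : Fin d) :
    |v i| ≤ W * gA lo hi p v := by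
  have h1 := (hp i).1
  have h2 := (hp i).2
  have hWpos : 0 < W := lt_of_lt_of_le (by linarith) (hW i).1
  have hg := gA_nonneg hp v
  rcases le_or_gt 0 (v i) with h | h
  · rw [abs_of_nonneg h]
    have hle := le_trans (le_max_left _ _) (term_le_gA (lo := lo) (hi := hi) (p := p) v i)
    calc v i = (hi i - p i) * ((v i) / (hi i - p i)) := by
          rw [mul_div_cancel₀ _ (by linarith : hi i - p i ≠ 0)]
    _ ≤ W * gA lo hi p v :=
        mul_le_mul (hW i).1 hle (div_nonneg h (by linarith)) hWpos.le
  · rw [abs_of_neg h]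
    have hle := le_trans (le_max_right _ _) (term_le_gA (lo := lo) (hi := hi) (p := p) v i)
    calc -v i = (p i - lo i) * ((-(v i)) / (p i - lo i)) := by
          rw [mul_div_cancel₀ _ (by linarith : p i - lo i ≠ 0)]
    _ ≤ W * gA lo hi p v :=
        mul_le_mul (hW i).2 hle (div_nonneg (by linarith) (by linarith)) hWpos.le

lemma gA_pos (hp : ∀ i, lo i < p i ∧ p i < hi i) (v : EuclideanSpace ℝ (Fin d)) (hv : v ≠ 0) :
    0 < gA lo hi p v := by
  have hex : ∃ i, v i ≠ 0 := by
    by_contra h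
    push_neg at h
    exact hv (PiLp.ext h)
  obtain ⟨i, hi0⟩ := hex
  have h1 := (hp i).1
  have h2 := (hp i).2
  refine lt_of_lt_of_le ?_ (term_le_gA v i)
  rcases lt_or_gt_of_ne hi0 with h | h
  · exact lt_max_of_lt_right (div_pos (by linarith) (by linarith))
  · exact lt_max_of_lt_left (div_pos h (by linarith))

lemma gA_le_one_iff (hp : ∀ i, lo i < p i ∧ p i < hi i) (x : EuclideanSpace ℝ (Fin d)) :
    gA lo hi p (x - p) ≤ 1 ↔ ∀ i, x i ∈ Icc (lo i) (hi i) := by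
  unfold gA
  rw [Finset.sup'_le_iff]
  constructor
  · intro h i
    have hh := h i (Finset.mem_univ i)
    rw [max_le_iff] at hh
    have h1 := (hp i).1
    have h2 := (hp i).2
    have hx : (x - p) i = x i - p i := rfl
    rw [hx] at hh
    obtain ⟨ha, hb⟩ := hh
    rw [div_le_one (by linarith)] at ha
    rw [div_le_one (by linarith)] at hb
    constructor <;> linarith
  · intro h i _
    have h1 := (hp i).1
    have h2 := (hp i).2
    have hx : (x - p) i = x i - p i := rfl
    rw [hx, max_le_iff, div_le_one (by linarith), div_le_one (by linarith)]
    obtain ⟨ha, hb⟩ := h i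
    constructor <;> linarith

lemma gA_lt_iff (hp : ∀ i, lo i < p i ∧ p i < hi i) (s : ℝ) (x : EuclideanSpace ℝ (Fin d)) :
    gA lo hi p (x - p) < s ↔
      ∀ i, x i ∈ Ioo (p i - s * (p i - lo i)) (p i + s * (hi i - p i)) := by
  unfold gA
  rw [Finset.sup'_lt_iff]
  constructor
  · intro h i
    have hh := h i (Finset.mem_univ i)
    rw [max_lt_iff] at hh
    have h1 := (hp i).1
    have h2 := (hp i).2
    have hx : (x - p) i = x i - p i := rfl
    rw [hx] at hh
    obtain ⟨ha, hb⟩ := hh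
    rw [div_lt_iff₀ (by linarith)] at ha
    rw [div_lt_iff₀ (by linarith)] at hb
    constructor <;> nlinarith
  · intro h i _
    have h1 := (hp i).1
    have h2 := (hp i).2
    have hx : (x - p) i = x i - p i := rfl
    rw [hx, max_lt_iff, div_lt_iff₀ (by linarith), div_lt_iff₀ (by linarith)]
    obtain ⟨ha, hb⟩ := h i
    constructor <;> nlinarith

lemma gA_eq_one_of_boundary (hp : ∀ i, lo i < p i ∧ p i < hi i) (x : EuclideanSpace ℝ (Fin d))
    (hx : gA lo hi p (x - p) ≤ 1) (i : Fin d) (hb : x i = lo i ∨ x i = hi i) :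
    gA lo hi p (x - p) = 1 := by
  refine le_antisymm hx ?_
  refine le_trans ?_ (term_le_gA (x - p) i)
  have h1 := (hp i).1
  have h2 := (hp i).2
  have hxi : (x - p) i = x i - p i := rfl
  rcases hb with h | h
  · refine le_max_of_le_right ?_
    rw [hxi, h, le_div_iff₀ (by linarith)]
    linarith
  · refine le_max_of_le_left ?_
    rw [hxi, h, le_div_iff₀ (by linarith)]
    linarith

end Gauge

section Rad

variable {d : ℕ} [Nonempty (Fin d)]

lemma euclid_norm_le {x : EuclideanSpace ℝ (Fin d)} {c : ℝ} (hc : 0 ≤ c)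
    (h : ∀ i, |x i| ≤ c) : ‖x‖ ≤ Real.sqrt d * c := by
  rw [EuclideanSpace.norm_eq]
  have hbound : ∑ i, ‖x i‖ ^ 2 ≤ (d : ℝ) * c ^ 2 := by
    calc ∑ i, ‖x i‖ ^ 2 ≤ ∑ _i : Fin d, c ^ 2 := by
          apply Finset.sum_le_sum
          intro i _
          rw [Real.norm_eq_abs]
          exact pow_le_pow_left₀ (abs_nonneg _) (h i) 2
    _ = (d : ℝ) * c ^ 2 := by simp [mul_comm]
  calc Real.sqrt (∑ i, ‖x i‖ ^ 2) ≤ Real.sqrt ((d : ℝ) * c ^ 2) := Real.sqrt_le_sqrt hbound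
  _ = Real.sqrt d * c := by
      rw [Real.sqrt_mul (Nat.cast_nonneg d), Real.sqrt_sq hc]

/-- Radial (gauge-based) expansion of the box, as a map on displacement vectors. -/
def rad (lo hi p : EuclideanSpace ℝ (Fin d)) (a b : ℝ) (v : EuclideanSpace ℝ (Fin d)) :
    EuclideanSpace ℝ (Fin d) :=
  (warp a b (gA lo hi p v) / gA lo hi p v) • v

variable {lo hi p : EuclideanSpace ℝ (Fin d)} {a b : ℝ}

lemma rad_zero : rad lo hi p a b 0 = 0 := by simp [rad]

lemma gA_rad (hp : ∀ i, lo i < p i ∧ p i < hi i)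
    (ha : 0 < a) (ha1 : a < 1) (hb : 0 < b) (hb1 : b < 1) (v : EuclideanSpace ℝ (Fin d)) :
    gA lo hi p (rad lo hi p a b v) = warp a b (gA lo hi p v) := by
  rcases eq_or_ne v 0 with rfl | hv
  · rw [rad_zero, gA_zero, warp_zero ha]
  · have hg : 0 < gA lo hi p v := gA_pos hp v hv
    have hw : 0 ≤ warp a b (gA lo hi p v) := warp_nonneg ha ha1 hb hb1 (gA_nonneg hp v)
    rw [rad, gA_smul (div_nonneg hw hg.le), div_mul_cancel₀ _ hg.ne']

lemma rad_rad (hp : ∀ i, lo i < p i ∧ p i < hi i)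
    (ha : 0 < a) (ha1 : a < 1) (hb : 0 < b) (hb1 : b < 1) (v : EuclideanSpace ℝ (Fin d)) :
    rad lo hi p b a (rad lo hi p a b v) = v := by
  rcases eq_or_ne v 0 with rfl | hv
  · rw [rad_zero, rad_zero]
  · have hg : 0 < gA lo hi p v := gA_pos hp v hv
    have hw : 0 < warp a b (gA lo hi p v) := by
      have := warp_strictMono ha ha1 hb hb1 hg
      rwa [warp_zero ha] at this
    rw [rad, gA_rad hp ha ha1 hb hb1, warp_warp ha ha1 hb hb1, rad, smul_smul]
    rw [div_mul_div_comm, mul_comm (gA lo hi p v), div_self (by positivity), one_smul]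

lemma rad_continuous (hp : ∀ i, lo i < p i ∧ p i < hi i)
    (ha : 0 < a) (ha1 : a < 1) (hb : 0 < b) (hb1 : b < 1)
    {W : ℝ} (hW : ∀ i, hi i - p i ≤ W ∧ p i - lo i ≤ W) :
    Continuous (rad lo hi p a b) := by
  have hWpos : 0 < W := lt_of_lt_of_le (by linarith [(hp (Classical.arbitrary _)).1, (hp (Classical.arbitrary _)).2]) (hW (Classical.arbitrary _)).1
  rw [continuous_iff_continuousAt]
  intro v
  rcases eq_or_ne v 0 with rfl | hv
  · rw [ContinuousAt, rad_zero]
    apply squeeze_zero_norm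
      (a := fun u => (Real.sqrt d * W) * warp a b (gA lo hi p u))
    · intro u
      rcases eq_or_ne u 0 with rfl | hu
      · rw [rad_zero, norm_zero, gA_zero, warp_zero ha]
        simp
      · have hg : 0 < gA lo hi p u := gA_pos hp u hu
        have hw : 0 ≤ warp a b (gA lo hi p u) := warp_nonneg ha ha1 hb hb1 hg.le
        rw [rad, norm_smul, Real.norm_eq_abs, abs_of_nonneg (div_nonneg hw hg.le)]
        have hnorm : ‖u‖ ≤ Real.sqrt d * (W * gA lo hi p u) :=
          euclid_norm_le (by positivity) (abs_coord_le hp hW u)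
        calc warp a b (gA lo hi p u) / gA lo hi p u * ‖u‖
            ≤ warp a b (gA lo hi p u) / gA lo hi p u * (Real.sqrt d * (W * gA lo hi p u)) := by
              apply mul_le_mul_of_nonneg_left hnorm (div_nonneg hw hg.le)
        _ = Real.sqrt d * W * warp a b (gA lo hi p u) := by
              field_simp
    · have hcont : Continuous fun u => Real.sqrt d * W * warp a b (gA lo hi p u) :=
        continuous_const.mul ((warp_continuous ha ha1).comp gA_continuous)
      have := hcont.tendsto 0
      rwa [gA_zero, warp_zero ha, mul_zero] at this
  · have hg : gA lo hi p v ≠ 0 := (gA_pos hp v hv).ne'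
    refine ContinuousAt.smul (f := fun u => warp a b (gA lo hi p u) / gA lo hi p u) (g := id) ?_ ?_
    · exact (((warp_continuous ha ha1).comp gA_continuous).continuousAt).div
        gA_continuous.continuousAt hg
    · exact continuousAt_id

end Rad

section Grid

variable {d N : ℕ} [Nonempty (Fin d)]

def Qlo (N : ℕ) (m : Fin d → Fin N) : EuclideanSpace ℝ (Fin d) := WithLp.toLp 2 fun i => (m i : ℝ) / N

def Qhi (N : ℕ) (m : Fin d → Fin N) : EuclideanSpace ℝ (Fin d) := WithLp.toLp 2 fun i => ((m i : ℝ) + 1) / N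

lemma Qlo_apply (N : ℕ) (m : Fin d → Fin N) (i : Fin d) : Qlo N m i = (m i : ℝ) / N := rfl

lemma Qhi_apply (N : ℕ) (m : Fin d → Fin N) (i : Fin d) : Qhi N m i = ((m i : ℝ) + 1) / N := rfl

def Qset (N : ℕ) (m : Fin d → Fin N) : Set (EuclideanSpace ℝ (Fin d)) :=
  {x | ∀ i, x i ∈ Icc (Qlo N m i) (Qhi N m i)}

lemma Qset_isClosed (m : Fin d → Fin N) : IsClosed (Qset N m) := by
  have : Qset N m = ⋂ i, (fun x : EuclideanSpace ℝ (Fin d) => x i) ⁻¹'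
      Icc (Qlo N m i) (Qhi N m i) := by
    ext x; simp [Qset, Set.mem_iInter]
  rw [this]
  exact isClosed_iInter fun i =>
    IsClosed.preimage (EuclideanSpace.proj (𝕜 := ℝ) i).continuous isClosed_Icc

lemma cube_isClosed : IsClosed (cube d) := by
  have : cube d = ⋂ i, (fun x : EuclideanSpace ℝ (Fin d) => x i) ⁻¹' Icc (0:ℝ) 1 := by
    ext x; simp [cube, Set.mem_iInter]
  rw [this]
  exact isClosed_iInter fun i =>
    IsClosed.preimage (EuclideanSpace.proj (𝕜 := ℝ) i).continuous isClosed_Icc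

lemma Qset_subset_cube (hN : 0 < N) (m : Fin d → Fin N) : Qset N m ⊆ cube d := by
  intro x hx i
  have h := hx i
  have hNR : (0:ℝ) < N := by exact_mod_cast hN
  have h1 : (0:ℝ) ≤ Qlo N m i := by
    apply div_nonneg (Nat.cast_nonneg _) hNR.le
  have h2 : Qhi N m i ≤ 1 := by
    rw [Qhi_apply, div_le_one hNR]
    have : (m i : ℕ) + 1 ≤ N := (m i).2
    exact_mod_cast this
  exact ⟨le_trans h1 h.1, le_trans h.2 h2⟩

def cho (hN : 0 < N) (x : EuclideanSpace ℝ (Fin d)) : Fin d → Fin N := fun i =>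
  ⟨min (⌊x i * N⌋₊) (N - 1), lt_of_le_of_lt (min_le_right _ _) (Nat.sub_lt hN one_pos)⟩

lemma cho_mem (hN : 0 < N) {x : EuclideanSpace ℝ (Fin d)} (hx : x ∈ cube d) :
    x ∈ Qset N (cho hN x) := by
  intro i
  obtain ⟨h0, h1⟩ := hx i
  have hNR : (0:ℝ) < N := by exact_mod_cast hN
  rcases le_or_gt (⌊x i * N⌋₊) (N - 1) with hc | hc
  · have hk : (cho hN x i : ℕ) = ⌊x i * N⌋₊ := by simp [cho, min_eq_left hc]
    constructor
    · rw [Qlo_apply, div_le_iff₀ hNR, hk]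
      exact (Nat.floor_le (by positivity)).trans (by ring_nf; exact le_refl _)
    · rw [Qhi_apply, le_div_iff₀ hNR, hk]
      have := Nat.lt_floor_add_one (x i * N)
      push_cast
      push_cast at this
      linarith
  · have hk : (cho hN x i : ℕ) = N - 1 := by simp [cho, min_eq_right hc.le]
    have hge : (N : ℝ) ≤ x i * N := by
      have : N ≤ ⌊x i * N⌋₊ := by omega
      have h2 := Nat.le_floor_iff (α := ℝ) (by positivity) |>.1 this
      exact_mod_cast h2
    have hx1 : x i = 1 := le_antisymm h1 (by nlinarith)
    have hcast : ((N - 1 : ℕ) : ℝ) = (N : ℝ) - 1 := by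
      rw [Nat.cast_sub hN]; simp
    constructor
    · rw [Qlo_apply, hk, hcast, hx1, div_le_one hNR]; linarith
    · rw [Qhi_apply, hk, hcast, hx1, le_div_iff₀ hNR]; linarith

variable {P : (Fin d → Fin N) → EuclideanSpace ℝ (Fin d)} {A B : (Fin d → Fin N) → ℝ}

def loc (P : (Fin d → Fin N) → EuclideanSpace ℝ (Fin d)) (A B : (Fin d → Fin N) → ℝ)
    (m : Fin d → Fin N) (x : EuclideanSpace ℝ (Fin d)) : EuclideanSpace ℝ (Fin d) :=
  P m + rad (Qlo N m) (Qhi N m) (P m) (A m) (B m) (x - P m)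

lemma loc_sub (m : Fin d → Fin N) (x : EuclideanSpace ℝ (Fin d)) :
    loc P A B m x - P m = rad (Qlo N m) (Qhi N m) (P m) (A m) (B m) (x - P m) := by
  rw [loc, add_sub_cancel_left]

section locProps

variable (hP : ∀ m i, Qlo N m i < P m i ∧ P m i < Qhi N m i)
  (hA : ∀ m, 0 < A m ∧ A m < 1) (hB : ∀ m, 0 < B m ∧ B m < 1)

include hP hA hB

lemma loc_mem {m : Fin d → Fin N} {x : EuclideanSpace ℝ (Fin d)} (hx : x ∈ Qset N m) :
    loc P A B m x ∈ Qset N m := by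
  have h1 : gA (Qlo N m) (Qhi N m) (P m) (x - P m) ≤ 1 := by
    rw [gA_le_one_iff (hP m)]; exact hx
  have : gA (Qlo N m) (Qhi N m) (P m) (loc P A B m x - P m) ≤ 1 := by
    rw [loc_sub, gA_rad (hP m) (hA m).1 (hA m).2 (hB m).1 (hB m).2]
    exact warp_le_one (hA m).1 (hA m).2 (hB m).1 (hB m).2 h1
  rw [gA_le_one_iff (hP m)] at this
  exact this

lemma loc_fix {m : Fin d → Fin N} {x : EuclideanSpace ℝ (Fin d)} (hx : x ∈ Qset N m)
    (hb : ∃ i, x i = Qlo N m i ∨ x i = Qhi N m i) : loc P A B m x = x := by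
  obtain ⟨i, hi⟩ := hb
  have h1 : gA (Qlo N m) (Qhi N m) (P m) (x - P m) ≤ 1 := by
    rw [gA_le_one_iff (hP m)]; exact hx
  have hone : gA (Qlo N m) (Qhi N m) (P m) (x - P m) = 1 :=
    gA_eq_one_of_boundary (hP m) x h1 i hi
  rw [loc, rad, hone, warp_one (hA m).2, div_one, one_smul, add_sub_cancel]

lemma loc_loc {m : Fin d → Fin N} (x : EuclideanSpace ℝ (Fin d)) :
    loc P B A m (loc P A B m x) = x := by
  rw [loc, loc_sub, rad_rad (hP m) (hA m).1 (hA m).2 (hB m).1 (hB m).2, add_sub_cancel]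

lemma loc_continuous (hN : 0 < N) (m : Fin d → Fin N) : Continuous (loc P A B m) := by
  have hNR : (0:ℝ) < N := by exact_mod_cast hN
  have hW : ∀ i, Qhi N m i - P m i ≤ 1 / N ∧ P m i - Qlo N m i ≤ 1 / N := by
    intro i
    have h1 := (hP m i).1
    have h2 := (hP m i).2
    have : Qhi N m i - Qlo N m i = 1 / N := by
      rw [Qhi_apply, Qlo_apply, div_sub_div_same]; ring_nf
    constructor <;> [linarith [this]; linarith [this]]
  exact continuous_const.add
    ((rad_continuous (hP m) (hA m).1 (hA m).2 (hB m).1 (hB m).2 hW).comp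
      (continuous_id.sub continuous_const))

end locProps

lemma overlap {m m' : Fin d → Fin N} (hm : m ≠ m') {x : EuclideanSpace ℝ (Fin d)}
    (hx : x ∈ Qset N m) (hx' : x ∈ Qset N m') :
    ∃ i, x i = Qlo N m i ∨ x i = Qhi N m i := by
  have : ∃ i, m i ≠ m' i := by
    by_contra h
    push_neg at h
    exact hm (funext h)
  obtain ⟨i, hi⟩ := this
  have hNR : (0:ℝ) < N := by
    have := (m i).2
    have : 0 < N := by omega
    exact_mod_cast this
  refine ⟨i, ?_⟩
  rcases lt_or_gt_of_ne (fun h => hi (Fin.ext h) : (m i : ℕ) ≠ (m' i : ℕ)) with h | h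
  · right
    have hle : ((m i : ℕ) : ℝ) + 1 ≤ ((m' i : ℕ) : ℝ) := by exact_mod_cast h
    refine le_antisymm (hx i).2 ?_
    calc Qhi N m i = ((m i : ℝ) + 1) / N := rfl
    _ ≤ ((m' i : ℕ) : ℝ) / N := by gcongr
    _ ≤ x i := (hx' i).1
  · left
    have hle : ((m' i : ℕ) : ℝ) + 1 ≤ ((m i : ℕ) : ℝ) := by exact_mod_cast h
    refine le_antisymm ?_ (hx i).1
    calc x i ≤ Qhi N m' i := (hx' i).2
    _ = ((m' i : ℝ) + 1) / N := rfl
    _ ≤ ((m i : ℕ) : ℝ) / N := by gcongr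
    _ = Qlo N m i := rfl

end Grid

section Glob

variable {d N : ℕ} [Nonempty (Fin d)]
variable {P : (Fin d → Fin N) → EuclideanSpace ℝ (Fin d)} {A B : (Fin d → Fin N) → ℝ}

def glob (hN : 0 < N) (P : (Fin d → Fin N) → EuclideanSpace ℝ (Fin d))
    (A B : (Fin d → Fin N) → ℝ) (x : EuclideanSpace ℝ (Fin d)) : EuclideanSpace ℝ (Fin d) :=
  loc P A B (cho hN x) x

variable (hN : 0 < N) (hP : ∀ m i, Qlo N m i < P m i ∧ P m i < Qhi N m i)
  (hA : ∀ m, 0 < A m ∧ A m < 1) (hB : ∀ m, 0 < B m ∧ B m < 1)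

include hN hP hA hB

lemma glob_agree {x : EuclideanSpace ℝ (Fin d)} (hx : x ∈ cube d)
    {m : Fin d → Fin N} (hm : x ∈ Qset N m) : glob hN P A B x = loc P A B m x := by
  by_cases h : cho hN x = m
  · rw [glob, h]
  · have hc := cho_mem hN hx
    have h1 : loc P A B (cho hN x) x = x :=
      loc_fix hP hA hB hc (overlap h hc hm)
    have h2 : loc P A B m x = x :=
      loc_fix hP hA hB hm (overlap (Ne.symm h) hm hc)
    rw [glob, h1, h2]

lemma glob_mem {x : EuclideanSpace ℝ (Fin d)} (hx : x ∈ cube d) :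
    glob hN P A B x ∈ Qset N (cho hN x) :=
  loc_mem hP hA hB (cho_mem hN hx)

lemma glob_inv {x : EuclideanSpace ℝ (Fin d)} (hx : x ∈ cube d) :
    glob hN P B A (glob hN P A B x) = x := by
  set m := cho hN x with hm
  have hxm : x ∈ Qset N m := cho_mem hN hx
  have hy : glob hN P A B x ∈ Qset N m := glob_mem hN hP hA hB hx
  have hyc : glob hN P A B x ∈ cube d := Qset_subset_cube hN m hy
  rw [glob_agree hN hP hB hA hyc hy]
  rw [glob, ← hm]
  exact loc_loc hP hA hB x

lemma glob_continuousOn : ContinuousOn (glob hN P A B) (cube d) := by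
  have hcov : cube d = ⋃ m : Fin d → Fin N, (Qset N m ∩ cube d) := by
    ext x
    constructor
    · intro hx
      exact Set.mem_iUnion.2 ⟨cho hN x, cho_mem hN hx, hx⟩
    · rintro hx
      obtain ⟨m, _, hx2⟩ := Set.mem_iUnion.1 hx
      exact hx2
  rw [hcov]
  apply LocallyFinite.continuousOn_iUnion (locallyFinite_of_finite _)
  · exact fun m => (Qset_isClosed m).inter cube_isClosed
  · intro m
    exact ((loc_continuous hP hA hB hN m).continuousOn).congr
      fun x hx => glob_agree hN hP hA hB hx.2 hx.1

end Glob

section Volume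

variable {d : ℕ}

lemma volume_box (lo hi : EuclideanSpace ℝ (Fin d)) :
    volume {x : EuclideanSpace ℝ (Fin d) | ∀ i, x i ∈ Icc (lo i) (hi i)} =
      ∏ i, ENNReal.ofReal (hi i - lo i) := by
  have hpres := EuclideanSpace.volume_preserving_symm_measurableEquiv_toLp (Fin d)
  have hset : {x : EuclideanSpace ℝ (Fin d) | ∀ i, x i ∈ Icc (lo i) (hi i)} =
      (MeasurableEquiv.toLp 2 (Fin d → ℝ)).symm ⁻¹'
        (Set.univ.pi fun i => Icc (lo i) (hi i)) := by
    ext x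
    simp only [Set.mem_setOf_eq, Set.mem_preimage, Set.mem_pi, Set.mem_univ, true_implies]
    exact Iff.rfl
  rw [hset, hpres.measure_preimage
    ((MeasurableSet.univ_pi fun i => measurableSet_Icc).nullMeasurableSet)]
  rw [volume_pi_pi]
  simp [Real.volume_Icc]

lemma volume_obox (lo hi : EuclideanSpace ℝ (Fin d)) :
    volume {x : EuclideanSpace ℝ (Fin d) | ∀ i, x i ∈ Ioo (lo i) (hi i)} =
      ∏ i, ENNReal.ofReal (hi i - lo i) := by
  have hpres := EuclideanSpace.volume_preserving_symm_measurableEquiv_toLp (Fin d)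
  have hset : {x : EuclideanSpace ℝ (Fin d) | ∀ i, x i ∈ Ioo (lo i) (hi i)} =
      (MeasurableEquiv.toLp 2 (Fin d → ℝ)).symm ⁻¹'
        (Set.univ.pi fun i => Ioo (lo i) (hi i)) := by
    ext x
    simp only [Set.mem_setOf_eq, Set.mem_preimage, Set.mem_pi, Set.mem_univ, true_implies]
    exact Iff.rfl
  rw [hset, hpres.measure_preimage
    ((MeasurableSet.univ_pi fun i => measurableSet_Ioo).nullMeasurableSet)]
  rw [volume_pi_pi]
  simp [Real.volume_Ioo]

lemma obox_isOpen (lo hi : EuclideanSpace ℝ (Fin d)) :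
    IsOpen {x : EuclideanSpace ℝ (Fin d) | ∀ i, x i ∈ Ioo (lo i) (hi i)} := by
  have : {x : EuclideanSpace ℝ (Fin d) | ∀ i, x i ∈ Ioo (lo i) (hi i)} =
      ⋂ i, (fun x : EuclideanSpace ℝ (Fin d) => x i) ⁻¹' Ioo (lo i) (hi i) := by
    ext x; simp [Set.mem_iInter]
  rw [this]
  exact isOpen_iInter_of_finite fun i =>
    IsOpen.preimage (EuclideanSpace.proj (𝕜 := ℝ) i).continuous isOpen_Ioo

lemma one_sub_pow_le {s : ℝ} (h0 : 0 ≤ s) (h1 : s ≤ 1) (n : ℕ) :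
    1 - s ^ n ≤ n * (1 - s) := by
  induction n with
  | zero => simp
  | succ k ih =>
      have : 1 - s ^ (k + 1) = (1 - s) + s * (1 - s ^ k) := by ring
      rw [this]
      have h2 : s * (1 - s ^ k) ≤ 1 * (1 - s ^ k) := by
        apply mul_le_mul_of_nonneg_right h1
        nlinarith [pow_le_one₀ h0 h1 (n := k)]
      push_cast
      nlinarith

end Volume

section Compact

variable {d : ℕ} [Nonempty (Fin d)]

lemma cube_isCompact : IsCompact (cube d) := by
  apply IsCompact.of_isClosed_subset
    (isCompact_closedBall (0 : EuclideanSpace ℝ (Fin d)) (Real.sqrt d)) cube_isClosed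
  intro x hx
  rw [Metric.mem_closedBall, dist_zero_right]
  have h := euclid_norm_le (c := 1) one_pos.le
    (fun i => abs_le.2 ⟨by linarith [(hx i).1], (hx i).2⟩)
  simpa using h

end Compact

/-- For every nowhere dense set `K ⊆ [0,1]^d` and all `ε, δ > 0` there is a
homeomorphism `h` of the cube within uniform distance `δ` of the identity such
that `λ(h(K)) < ε`. -/
theorem stmt16 (d : ℕ) (K : Set ↥(cube d)) (hK : IsNowhereDense K)
    (ε δ : ℝ) (hε : 0 < ε) (hδ : 0 < δ) :
    ∃ h : ↥(cube d) ≃ₜ ↥(cube d), (∀ x : ↥(cube d), dist (h x) x < δ) ∧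
      volume ((↑) '' (h '' K) : Set (EuclideanSpace ℝ (Fin d))) <
        ENNReal.ofReal ε := by
  rcases Nat.eq_zero_or_pos d with hd0 | hd
  · subst hd0
    haveI : Subsingleton (EuclideanSpace ℝ (Fin 0)) := ⟨fun a b => PiLp.ext fun i => Fin.elim0 i⟩
    haveI : Subsingleton ↥(cube 0) := ⟨fun a b => Subtype.ext (Subsingleton.elim _ _)⟩
    have hKempty : K = ∅ := by
      by_contra hne
      obtain ⟨x, hx⟩ := Set.nonempty_iff_ne_empty.2 hne
      have huniv : K = Set.univ := Set.eq_univ_of_forall fun y => by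
        have hyx : y = x := Subsingleton.elim y x
        rwa [hyx]
      rw [IsNowhereDense, huniv, closure_univ, interior_univ] at hK
      exact (Set.eq_empty_iff_forall_notMem.1 hK x) trivial
    refine ⟨Homeomorph.refl _, fun x => by simpa using hδ, ?_⟩
    rw [hKempty]
    simpa using ENNReal.ofReal_pos.2 hε
  · haveI : Nonempty (Fin d) := ⟨⟨0, hd⟩⟩
    have hd1 : (1:ℝ) ≤ d := by exact_mod_cast hd
    have hsd : (0:ℝ) < Real.sqrt d := Real.sqrt_pos.2 (by positivity)
    obtain ⟨N, hNgt⟩ := exists_nat_gt (max (Real.sqrt d / δ) 1)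
    have hNR1 : (1:ℝ) < N := lt_of_le_of_lt (le_max_right _ _) hNgt
    have hN : 0 < N := by exact_mod_cast lt_trans zero_lt_one hNR1
    have hNR : (0:ℝ) < N := by exact_mod_cast hN
    set s : ℝ := max (1 - ε/(2*d)) (1/2) with hs_def
    have hs0 : (0:ℝ) < s := lt_of_lt_of_le one_half_pos (le_max_right _ _)
    have hs1 : s < 1 := by
      apply max_lt
      · have : 0 < ε/(2*d) := by positivity
        linarith
      · norm_num
    have hsε : 1 - s^d < ε := by
      have h1 : 1 - s ≤ ε/(2*d) := by
        have := le_max_left (1 - ε/(2*d)) (1/2)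
        have hsge : 1 - ε/(2*d) ≤ s := this
        linarith
      have h2 : 1 - s^d ≤ d * (1-s) := one_sub_pow_le hs0.le hs1.le d
      have h3 : (d:ℝ) * (1 - s) ≤ d * (ε/(2*d)) := by
        apply mul_le_mul_of_nonneg_left h1 (by positivity)
      have h4 : (d:ℝ) * (ε/(2*d)) = ε/2 := by
        field_simp
      linarith
    set C : Set (EuclideanSpace ℝ (Fin d)) := Subtype.val '' (closure K) with hC_def
    have hCclosed : IsClosed C :=
      (cube_isClosed.isClosedEmbedding_subtypeVal).isClosedMap _ isClosed_closure
    have key : ∀ m : Fin d → Fin N, ∃ p : EuclideanSpace ℝ (Fin d), ∃ t : ℝ,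
        (∀ i, Qlo N m i < p i ∧ p i < Qhi N m i) ∧ 0 < t ∧ t < 1 ∧
        ∀ x ∈ Qset N m, x ∈ C → t < gA (Qlo N m) (Qhi N m) p (x - p) := by
      intro m
      set U : Set (EuclideanSpace ℝ (Fin d)) :=
        {x | ∀ i, x i ∈ Ioo (Qlo N m i) (Qhi N m i)} with hU_def
      have hUopen : IsOpen U := obox_isOpen _ _
      have hQloQhi : ∀ i, Qlo N m i < Qhi N m i := by
        intro i
        rw [Qlo_apply, Qhi_apply]
        apply div_lt_div_of_pos_right (by linarith) hNR
      set mid : EuclideanSpace ℝ (Fin d) := WithLp.toLp 2 fun i => (Qlo N m i + Qhi N m i)/2 with hmid_def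
      have hmidU : mid ∈ U := by
        intro i
        have := hQloQhi i
        have hm : mid i = (Qlo N m i + Qhi N m i)/2 := rfl
        constructor <;> [rw [hm]; rw [hm]] <;> linarith
      have hUQ : U ⊆ Qset N m := fun x hx i => ⟨(hx i).1.le, (hx i).2.le⟩
      have hnot : ¬ U ⊆ C := by
        intro hsub
        have hmidcube : mid ∈ cube d := Qset_subset_cube hN m (hUQ hmidU)
        have hopen2 : IsOpen (Subtype.val ⁻¹' U : Set ↥(cube d)) :=
          hUopen.preimage continuous_subtype_val
        have hsub2 : (Subtype.val ⁻¹' U : Set ↥(cube d)) ⊆ closure K := by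
          intro y hy
          exact Subtype.val_injective.mem_set_image.1 (hsub hy)
        have hmem : (⟨mid, hmidcube⟩ : ↥(cube d)) ∈ interior (closure K) :=
          (hopen2.subset_interior_iff.2 hsub2) hmidU
        rw [hK] at hmem
        exact hmem
      obtain ⟨q, hqU, hqC⟩ := Set.not_subset.1 hnot
      obtain ⟨r, hr0, hball⟩ := Metric.isOpen_iff.1 hCclosed.isOpen_compl q hqC
      set t : ℝ := min (N * r / (2 * Real.sqrt d)) (1/2) with ht_def
      have ht0 : 0 < t := lt_min (by positivity) one_half_pos
      have ht1 : t < 1 := lt_of_le_of_lt (min_le_right _ _) (by norm_num)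
      refine ⟨q, t, fun i => hqU i, ht0, ht1, ?_⟩
      intro x hxQ hxC
      by_contra hcon
      push_neg at hcon
      have hp : ∀ i, Qlo N m i < q i ∧ q i < Qhi N m i := fun i => hqU i
      have hW : ∀ i, Qhi N m i - q i ≤ 1/N ∧ q i - Qlo N m i ≤ 1/N := by
        intro i
        have h1 := (hp i).1
        have h2 := (hp i).2
        have hlen : Qhi N m i - Qlo N m i = 1/N := by
          rw [Qhi_apply, Qlo_apply, div_sub_div_same]
          ring_nf
        constructor <;> linarith
      have hgnn : 0 ≤ gA (Qlo N m) (Qhi N m) q (x - q) := gA_nonneg hp _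
      have hcoord : ∀ i, |(x - q) i| ≤ (1/N) * t := by
        intro i
        refine (abs_coord_le hp hW (x - q) i).trans ?_
        apply mul_le_mul_of_nonneg_left hcon (by positivity)
      have hnorm : ‖x - q‖ ≤ Real.sqrt d * ((1/N) * t) :=
        euclid_norm_le (by positivity) hcoord
      have hxball : x ∈ Metric.ball q r := by
        rw [Metric.mem_ball, dist_eq_norm]
        have ht' : t ≤ N * r/(2*Real.sqrt d) := min_le_left _ _
        have hkey : Real.sqrt d * ((1/N) * t) < r := by
          have hc1 : Real.sqrt d * ((1/N) * t) ≤ Real.sqrt d * ((1/N) * (N * r/(2*Real.sqrt d))) := by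
            apply mul_le_mul_of_nonneg_left _ hsd.le
            apply mul_le_mul_of_nonneg_left ht' (by positivity)
          have hc2 : Real.sqrt d * ((1/N) * (N * r/(2*Real.sqrt d))) = r/2 := by
            field_simp
          linarith
        linarith
      exact hball hxball hxC
    choose p t hPint ht0 ht1 hsep using key
    set A : (Fin d → Fin N) → ℝ := t with hA_def
    set B : (Fin d → Fin N) → ℝ := fun _ => s with hB_def
    have hA : ∀ m, 0 < A m ∧ A m < 1 := fun m => ⟨ht0 m, ht1 m⟩
    have hB : ∀ m, 0 < B m ∧ B m < 1 := fun _ => ⟨hs0, hs1⟩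
    have hmemF : ∀ x : ↥(cube d), glob hN p A B ↑x ∈ cube d := fun x =>
      Qset_subset_cube hN _ (glob_mem hN hPint hA hB x.2)
    have hmemG : ∀ x : ↥(cube d), glob hN p B A ↑x ∈ cube d := fun x =>
      Qset_subset_cube hN _ (glob_mem hN hPint hB hA x.2)
    set e : ↥(cube d) ≃ ↥(cube d) :=
      { toFun := fun x => ⟨glob hN p A B ↑x, hmemF x⟩
        invFun := fun x => ⟨glob hN p B A ↑x, hmemG x⟩
        left_inv := fun x => Subtype.ext (glob_inv hN hPint hA hB x.2)
        right_inv := fun x => Subtype.ext (glob_inv hN hPint hB hA x.2) } with he_def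
    have hcontF : Continuous fun x : ↥(cube d) => glob hN p A B ↑x :=
      (glob_continuousOn hN hPint hA hB).restrict
    have hcont : Continuous e := hcontF.subtype_mk _
    haveI : CompactSpace ↥(cube d) := isCompact_iff_compactSpace.1 cube_isCompact
    refine ⟨hcont.homeoOfEquivCompactToT2, ?_, ?_⟩
    · intro x
      have hx1 : glob hN p A B ↑x ∈ Qset N (cho hN ↑x) := glob_mem hN hPint hA hB x.2
      have hx2 : (↑x : EuclideanSpace ℝ (Fin d)) ∈ Qset N (cho hN ↑x) := cho_mem hN x.2
      have hcoord : ∀ i, |(glob hN p A B ↑x - ↑x) i| ≤ 1/N := by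
        intro i
        have h1 := hx1 i
        have h2 := hx2 i
        have hlen : Qhi N (cho hN ↑x) i - Qlo N (cho hN ↑x) i = 1/N := by
          rw [Qhi_apply, Qlo_apply, div_sub_div_same]
          ring_nf
        have hsub : (glob hN p A B ↑x - ↑x) i = glob hN p A B ↑x i - (↑x : EuclideanSpace ℝ (Fin d)) i := rfl
        rw [hsub, abs_le]
        constructor <;> [linarith [h1.1, h2.2]; linarith [h1.2, h2.1]]
      have hnd : dist (hcont.homeoOfEquivCompactToT2 x) x = ‖glob hN p A B ↑x - ↑x‖ := by
        rw [Subtype.dist_eq, dist_eq_norm]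
        rfl
      rw [hnd]
      have hb := euclid_norm_le (c := 1/N) (by positivity) hcoord
      have hlt : Real.sqrt d * (1/N) < δ := by
        have h1 : Real.sqrt d / δ < N := lt_of_le_of_lt (le_max_left _ _) hNgt
        rw [div_lt_iff₀ hδ] at h1
        rw [mul_one_div, div_lt_iff₀ hNR]
        linarith [h1]
      linarith
    · have himg : (↑) '' (hcont.homeoOfEquivCompactToT2 '' K) ⊆
          ⋃ m : Fin d → Fin N, (Qset N m \
            {y : EuclideanSpace ℝ (Fin d) | ∀ i,
              y i ∈ Ioo (p m i - s * (p m i - Qlo N m i)) (p m i + s * (Qhi N m i - p m i))}) := by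
        rintro z ⟨y, ⟨x, hxK, rfl⟩, rfl⟩
        set m := cho hN (↑x : EuclideanSpace ℝ (Fin d)) with hm_def
        have hxQ : (↑x : EuclideanSpace ℝ (Fin d)) ∈ Qset N m := cho_mem hN x.2
        have hzQ : glob hN p A B ↑x ∈ Qset N m := glob_mem hN hPint hA hB x.2
        have hxC : (↑x : EuclideanSpace ℝ (Fin d)) ∈ C := ⟨x, subset_closure hxK, rfl⟩
        have hgt : t m < gA (Qlo N m) (Qhi N m) (p m) (↑x - p m) := hsep m ↑x hxQ hxC
        have hgA : gA (Qlo N m) (Qhi N m) (p m) (glob hN p A B ↑x - p m)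
            = warp (t m) s (gA (Qlo N m) (Qhi N m) (p m) (↑x - p m)) := by
          rw [glob, ← hm_def, loc_sub, gA_rad (hPint m) (hA m).1 (hA m).2 (hB m).1 (hB m).2]
        have hgts : s < gA (Qlo N m) (Qhi N m) (p m) (glob hN p A B ↑x - p m) := by
          rw [hgA]
          have hh := warp_strictMono (ht0 m) (ht1 m) hs0 hs1 hgt
          rwa [warp_self (ht0 m)] at hh
        refine Set.mem_iUnion.2 ⟨m, hzQ, ?_⟩
        intro hzO
        have hlt := (gA_lt_iff (hPint m) s (glob hN p A B ↑x)).2 (fun i => hzO i)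
        linarith
      have hsubO : ∀ m : Fin d → Fin N,
          {y : EuclideanSpace ℝ (Fin d) | ∀ i,
            y i ∈ Ioo (p m i - s * (p m i - Qlo N m i)) (p m i + s * (Qhi N m i - p m i))}
          ⊆ Qset N m := by
        intro m y hy i
        have h1 := (hPint m i).1
        have h2 := (hPint m i).2
        have h3 := (hy i).1
        have h4 := (hy i).2
        constructor <;> nlinarith [hs1.le, hs0.le]
      have hOvol : ∀ m : Fin d → Fin N,
          volume {y : EuclideanSpace ℝ (Fin d) | ∀ i,
            y i ∈ Ioo (p m i - s * (p m i - Qlo N m i)) (p m i + s * (Qhi N m i - p m i))}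
          = ENNReal.ofReal ((s/N)^d) := by
        intro m
        rw [volume_obox (WithLp.toLp 2 fun i => p m i - s * (p m i - Qlo N m i))
          (WithLp.toLp 2 fun i => p m i + s * (Qhi N m i - p m i))]
        have hlen : ∀ i : Fin d, (p m i + s * (Qhi N m i - p m i)) -
            (p m i - s * (p m i - Qlo N m i)) = s/N := by
          intro i
          have : Qhi N m i - Qlo N m i = 1/N := by
            rw [Qhi_apply, Qlo_apply, div_sub_div_same]
            ring_nf
          have hexp : (p m i + s * (Qhi N m i - p m i)) - (p m i - s * (p m i - Qlo N m i))
              = s * (Qhi N m i - Qlo N m i) := by ring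
          rw [hexp, this]
          ring
        calc (∏ i : Fin d, ENNReal.ofReal ((fun i => p m i + s * (Qhi N m i - p m i)) i -
              (fun i => p m i - s * (p m i - Qlo N m i)) i))
            = ∏ _i : Fin d, ENNReal.ofReal (s/N) := by
              apply Finset.prod_congr rfl
              intro i _
              rw [hlen i]
        _ = ENNReal.ofReal (s/N) ^ d := by
              rw [Finset.prod_const, Finset.card_univ, Fintype.card_fin]
        _ = ENNReal.ofReal ((s/N)^d) := by
              rw [ENNReal.ofReal_pow (by positivity)]
      have hQvol : ∀ m : Fin d → Fin N, volume (Qset N m) = ENNReal.ofReal ((1/N)^d) := by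
        intro m
        rw [Qset, volume_box (Qlo N m) (Qhi N m)]
        have hlen : ∀ i : Fin d, Qhi N m i - Qlo N m i = 1/N := by
          intro i
          rw [Qhi_apply, Qlo_apply, div_sub_div_same]
          ring_nf
        calc (∏ i : Fin d, ENNReal.ofReal (Qhi N m i - Qlo N m i))
            = ∏ _i : Fin d, ENNReal.ofReal (1/N) := by
              apply Finset.prod_congr rfl
              intro i _
              rw [hlen i]
        _ = ENNReal.ofReal (1/N) ^ d := by
              rw [Finset.prod_const, Finset.card_univ, Fintype.card_fin]
        _ = ENNReal.ofReal ((1/N)^d) := by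
              rw [ENNReal.ofReal_pow (by positivity)]
      have hshell : ∀ m : Fin d → Fin N,
          volume (Qset N m \
            {y : EuclideanSpace ℝ (Fin d) | ∀ i,
              y i ∈ Ioo (p m i - s * (p m i - Qlo N m i)) (p m i + s * (Qhi N m i - p m i))})
          = ENNReal.ofReal ((1/N)^d - (s/N)^d) := by
        intro m
        rw [measure_diff (hsubO m) ((obox_isOpen (WithLp.toLp 2 fun i => p m i - s * (p m i - Qlo N m i))
            (WithLp.toLp 2 fun i => p m i + s * (Qhi N m i - p m i))).measurableSet.nullMeasurableSet)
          (by rw [hOvol m]; exact ENNReal.ofReal_ne_top)]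
        rw [hOvol m, hQvol m, ← ENNReal.ofReal_sub _ (by positivity)]
      calc volume ((↑) '' (hcont.homeoOfEquivCompactToT2 '' K) : Set (EuclideanSpace ℝ (Fin d)))
          ≤ volume (⋃ m : Fin d → Fin N, (Qset N m \
            {y : EuclideanSpace ℝ (Fin d) | ∀ i,
              y i ∈ Ioo (p m i - s * (p m i - Qlo N m i)) (p m i + s * (Qhi N m i - p m i))})) :=
            measure_mono himg
      _ ≤ ∑' m : Fin d → Fin N, volume (Qset N m \
            {y : EuclideanSpace ℝ (Fin d) | ∀ i,
              y i ∈ Ioo (p m i - s * (p m i - Qlo N m i)) (p m i + s * (Qhi N m i - p m i))}) :=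
            measure_iUnion_le _
      _ = (Fintype.card (Fin d → Fin N) : ENNReal) * ENNReal.ofReal ((1/N)^d - (s/N)^d) := by
            rw [tsum_fintype]
            rw [Finset.sum_congr rfl (fun m _ => hshell m)]
            rw [Finset.sum_const, Finset.card_univ, nsmul_eq_mul]
      _ = ENNReal.ofReal (1 - s^d) := by
            have hcard : Fintype.card (Fin d → Fin N) = N ^ d := by
              rw [Fintype.card_fun, Fintype.card_fin, Fintype.card_fin]
            rw [hcard]
            rw [← ENNReal.ofReal_natCast (N^d), ← ENNReal.ofReal_mul (by positivity)]
            congr 1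
            push_cast
            field_simp
            rw [mul_sub, ← mul_pow, ← mul_pow, mul_one_div_cancel hNR.ne', one_pow]
            congr 2
            field_simp
      _ < ENNReal.ofReal ε := (ENNReal.ofReal_lt_ofReal_iff hε).2 hsε
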